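/- Let k ≥ 1 and let A = ℂ[x, y, f_0, …, f_k] / ⟨x·f_{i−1} − y·f_i : 1 ≤ i ≤ k⟩. Then A is a reduced ring (it has no nonzero nilpotent elements). -/

import Mathlib

open MvPolynomial Finset

noncomputable def poncRel (k : ℕ) (i : Fin k) : MvPolynomial (Fin (k + 3)) ℂ :=
  X 0 * X ⟨(i : ℕ) + 2, by have := i.isLt; omega⟩
    - X 1 * X ⟨(i : ℕ) + 3, by have := i.isLt; omega⟩

namespace Stmt5

variable (k : ℕ)

/-- the variable index of `f_i` (junk for `i > k`). -/
def fi (i : ℕ) : Fin (k+3) := ⟨min (i+2) (k+2), by omega⟩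

lemma fi_val {i : ℕ} (h : i ≤ k) : ((fi k i : Fin (k+3)) : ℕ) = i + 2 := by
  simp only [fi]; omega

lemma fi_val_ge (i : ℕ) : 2 ≤ ((fi k i : Fin (k+3)) : ℕ) := by
  simp only [fi]; omega

lemma fi_inj {i j : ℕ} (hi : i ≤ k) (hj : j ≤ k) (h : fi k i = fi k j) : i = j := by
  have := congrArg (Fin.val) h
  rw [fi_val k hi, fi_val k hj] at this; omega

lemma val_zero' : ((0 : Fin (k+3)) : ℕ) = 0 := rfl

lemma val_one' : ((1 : Fin (k+3)) : ℕ) = 1 := by simp [Fin.val_one']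

lemma fi_ne_zero (i : ℕ) : fi k i ≠ 0 := by
  intro h
  have := congrArg (Fin.val) h
  have h2 := fi_val_ge k i
  rw [val_zero'] at this; omega

lemma fi_ne_one (i : ℕ) : fi k i ≠ 1 := by
  intro h
  have := congrArg (Fin.val) h
  have h2 := fi_val_ge k i
  rw [val_one'] at this; omega

lemma zero_ne_one' : (0 : Fin (k+3)) ≠ 1 := by
  intro h
  have := congrArg (Fin.val) h
  rw [val_zero', val_one'] at this; omega

lemma sum_fin_split (F : Fin (k+3) → ℕ) :
    ∑ t, F t = F 0 + F 1 + ∑ i ∈ range (k+1), F (fi k i) := by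
  rw [Fin.sum_univ_succ, Fin.sum_univ_succ]
  have h1 : ((0 : Fin (k+2)).succ : Fin (k+3)) = 1 := by
    apply Fin.ext; simp [val_one' k]
  rw [h1, ← add_assoc]
  congr 1
  rw [← Fin.sum_univ_eq_sum_range (fun i => F (fi k i)) (k+1)]
  apply Finset.sum_congr rfl
  intro t _
  congr 1
  apply Fin.ext
  rw [fi_val k (by omega : (t:ℕ) ≤ k)]
  simp

-- weights
def wA : Fin (k+3) → ℕ := fun t => if (t:ℕ) = 0 then 1 else if (t:ℕ) = 1 then 0 else (t:ℕ) - 2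
def wB : Fin (k+3) → ℕ := fun t => if (t:ℕ) = 0 then 0 else if (t:ℕ) = 1 then 1 else k - ((t:ℕ) - 2)
def wC : Fin (k+3) → ℕ := fun t => if (t:ℕ) < 2 then 0 else 1

def EA (d : Fin (k+3) →₀ ℕ) : ℕ := ∑ t, wA k t * d t
def EB (d : Fin (k+3) →₀ ℕ) : ℕ := ∑ t, wB k t * d t
def EC (d : Fin (k+3) →₀ ℕ) : ℕ := ∑ t, wC k t * d t

noncomputable def Emap (d : Fin (k+3) →₀ ℕ) : Fin 3 →₀ ℕ :=
  Finsupp.equivFunOnFinite.symm ![EA k d, EB k d, EC k d]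

lemma Emap_zero : Emap k 0 = 0 := by
  apply Finsupp.ext; intro m
  fin_cases m <;> simp [Emap, EA, EB, EC]

lemma EA_add (d e) : EA k (d + e) = EA k d + EA k e := by
  simp [EA, mul_add, Finset.sum_add_distrib]
lemma EB_add (d e) : EB k (d + e) = EB k d + EB k e := by
  simp [EB, mul_add, Finset.sum_add_distrib]
lemma EC_add (d e) : EC k (d + e) = EC k d + EC k e := by
  simp [EC, mul_add, Finset.sum_add_distrib]

lemma Emap_add (d e) : Emap k (d + e) = Emap k d + Emap k e := by
  apply Finsupp.ext; intro m
  fin_cases m <;>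
    simp [Emap, EA_add, EB_add, EC_add]

lemma EA_single (t : Fin (k+3)) (m : ℕ) : EA k (Finsupp.single t m) = wA k t * m := by
  rw [EA, Finset.sum_eq_single t]
  · rw [Finsupp.single_eq_same]
  · intro b _ hb; rw [Finsupp.single_eq_of_ne' (Ne.symm hb), mul_zero]
  · simp
lemma EB_single (t : Fin (k+3)) (m : ℕ) : EB k (Finsupp.single t m) = wB k t * m := by
  rw [EB, Finset.sum_eq_single t]
  · rw [Finsupp.single_eq_same]
  · intro b _ hb; rw [Finsupp.single_eq_of_ne' (Ne.symm hb), mul_zero]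
  · simp
lemma EC_single (t : Fin (k+3)) (m : ℕ) : EC k (Finsupp.single t m) = wC k t * m := by
  rw [EC, Finset.sum_eq_single t]
  · rw [Finsupp.single_eq_same]
  · intro b _ hb; rw [Finsupp.single_eq_of_ne' (Ne.symm hb), mul_zero]
  · simp

lemma Emap_smul (d : Fin (k+3) →₀ ℕ) (m : ℕ) : Emap k (m • d) = m • Emap k d := by
  apply Finsupp.ext; intro j
  fin_cases j <;>
    simp [Emap, EA, EB, EC, Finset.mul_sum, mul_left_comm]

def SA (d : Fin (k+3) →₀ ℕ) : ℕ := ∑ i ∈ range (k+1), i * d (fi k i)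
def SB (d : Fin (k+3) →₀ ℕ) : ℕ := ∑ i ∈ range (k+1), (k - i) * d (fi k i)
def SC (d : Fin (k+3) →₀ ℕ) : ℕ := ∑ i ∈ range (k+1), d (fi k i)

lemma wA_fi {i : ℕ} (h : i ≤ k) : wA k (fi k i) = i := by
  have h2 := fi_val k h
  simp only [wA, h2]; split_ifs <;> first | contradiction | omega
lemma wB_fi {i : ℕ} (h : i ≤ k) : wB k (fi k i) = k - i := by
  have h2 := fi_val k h
  simp only [wB, h2]; split_ifs <;> first | contradiction | omega
lemma wC_fi {i : ℕ} (h : i ≤ k) : wC k (fi k i) = 1 := by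
  have h2 := fi_val k h
  simp only [wC, h2]; split_ifs <;> first | contradiction | omega
lemma wA_zero : wA k 0 = 1 := by simp [wA, val_zero' k]
lemma wA_one : wA k 1 = 0 := by simp [wA, val_one' k]
lemma wB_zero : wB k 0 = 0 := by simp [wB, val_zero' k]
lemma wB_one : wB k 1 = 1 := by simp [wB, val_one' k]
lemma wC_zero : wC k 0 = 0 := by simp [wC, val_zero' k]
lemma wC_one : wC k 1 = 0 := by simp [wC, val_one' k]

lemma EA_eq (d) : EA k d = d 0 + SA k d := by
  rw [EA, sum_fin_split, wA_zero, wA_one, one_mul, zero_mul, add_zero]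
  congr 1
  apply Finset.sum_congr rfl
  intro i hi
  rw [Finset.mem_range] at hi
  rw [wA_fi k (by omega)]

lemma EB_eq (d) : EB k d = d 1 + SB k d := by
  rw [EB, sum_fin_split, wB_zero, wB_one, one_mul, zero_mul, zero_add]
  congr 1
  apply Finset.sum_congr rfl
  intro i hi
  rw [Finset.mem_range] at hi
  rw [wB_fi k (by omega)]

lemma EC_eq (d) : EC k d = SC k d := by
  rw [EC, sum_fin_split, wC_zero, wC_one, zero_mul, zero_mul, add_zero, zero_add]
  apply Finset.sum_congr rfl
  intro i hi
  rw [Finset.mem_range] at hi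
  rw [wC_fi k (by omega), one_mul]

lemma SA_add_SB (d) : SA k d + SB k d = k * SC k d := by
  rw [SA, SB, SC, ← Finset.sum_add_distrib, Finset.mul_sum]
  apply Finset.sum_congr rfl
  intro i hi
  rw [Finset.mem_range] at hi
  rw [← add_mul]
  congr 1
  omega


def SM (d : Fin (k+3) →₀ ℕ) : ℕ := ∑ i ∈ Ico 1 k, d (fi k i)
def SJ (d : Fin (k+3) →₀ ℕ) : ℕ := ∑ i ∈ Ico 1 k, i * d (fi k i)

def normal (d : Fin (k+3) →₀ ℕ) : Prop :=
  (d 0 = 0 ∨ ∀ i < k, d (fi k i) = 0) ∧ (d 1 = 0 ∨ SM k d ≤ 1)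

lemma SA_split (hk : 1 ≤ k) (d) : SA k d = SJ k d + k * d (fi k k) := by
  rw [SA, range_eq_Ico, Finset.sum_eq_sum_Ico_succ_bot (by omega : 0 < k + 1),
    Finset.sum_Ico_succ_top (by omega : 1 ≤ k)]
  rw [SJ]; omega

lemma SC_split (hk : 1 ≤ k) (d) : SC k d = d (fi k 0) + SM k d + d (fi k k) := by
  rw [SC, range_eq_Ico, Finset.sum_eq_sum_Ico_succ_bot (by omega : 0 < k + 1),
    Finset.sum_Ico_succ_top (by omega : 1 ≤ k)]
  rw [SM]; omega

lemma SA_of_normA (d) (hA : ∀ i < k, d (fi k i) = 0) : SA k d = k * d (fi k k) := by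
  rw [SA, Finset.sum_eq_single_of_mem k (by simp)]
  intro b hb hbk
  rw [Finset.mem_range] at hb
  rw [hA b (by omega), mul_zero]

lemma SB_of_normA (d) (hA : ∀ i < k, d (fi k i) = 0) : SB k d = 0 := by
  rw [SB]
  apply Finset.sum_eq_zero
  intro i hi
  rw [Finset.mem_range] at hi
  rcases eq_or_ne i k with h | h
  · rw [h]; simp
  · rw [hA i (by omega), mul_zero]

lemma SC_of_normA (d) (hA : ∀ i < k, d (fi k i) = 0) : SC k d = d (fi k k) := by
  rw [SC, Finset.sum_eq_single_of_mem k (by simp)]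
  intro b hb hbk
  rw [Finset.mem_range] at hb
  exact hA b (by omega)

lemma SA_le (d) : SA k d ≤ k * SC k d := by
  have := SA_add_SB k d; omega

lemma SM_le_SJ (d) : SM k d ≤ SJ k d := by
  apply Finset.sum_le_sum
  intro i hi
  rw [Finset.mem_Ico] at hi
  exact Nat.le_mul_of_pos_left _ (by omega)

lemma SJ_le (d) : SJ k d ≤ (k - 1) * SM k d := by
  rw [SM, Finset.mul_sum]
  apply Finset.sum_le_sum
  intro i hi
  rw [Finset.mem_Ico] at hi
  exact Nat.mul_le_mul_right _ (by omega)

lemma SM_zero_iff (d) : SM k d = 0 ↔ SJ k d = 0 := by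
  rw [SM, SJ, Finset.sum_eq_zero_iff, Finset.sum_eq_zero_iff]
  constructor
  · intro h i hi; rw [h i hi, mul_zero]
  · intro h i hi
    have := h i hi
    rw [Finset.mem_Ico] at hi
    have : i * d (fi k i) = 0 := this
    rcases Nat.mul_eq_zero.1 this with h' | h'
    · omega
    · exact h'

lemma sum_eq_one_exists (s : Finset ℕ) (f : ℕ → ℕ) (h : ∑ i ∈ s, f i = 1) :
    ∃ i₀ ∈ s, ∀ x ∈ s, f x = if x = i₀ then 1 else 0 := by
  have hne : ∑ i ∈ s, f i ≠ 0 := by omega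
  obtain ⟨i₀, hi₀, hfi₀⟩ := Finset.exists_ne_zero_of_sum_ne_zero hne
  refine ⟨i₀, hi₀, ?_⟩
  have hsplit := Finset.add_sum_erase s f hi₀
  have hzero : ∀ x ∈ s.erase i₀, f x = 0 := by
    rw [← Finset.sum_eq_zero_iff]
    omega
  intro x hx
  rcases eq_or_ne x i₀ with rfl | hxne
  · rw [if_pos rfl]; omega
  · rw [if_neg hxne]
    exact hzero x (Finset.mem_erase.2 ⟨hxne, hx⟩)

lemma Emap_applyA (d) : Emap k d 0 = EA k d := by
  simp [Emap]
lemma Emap_applyB (d) : Emap k d 1 = EB k d := by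
  simp [Emap]
lemma Emap_applyC (d) : Emap k d 2 = EC k d := by
  simp [Emap]

lemma ext_exp (d d' : Fin (k+3) →₀ ℕ) (h0 : d 0 = d' 0) (h1 : d 1 = d' 1)
    (hf : ∀ i ≤ k, d (fi k i) = d' (fi k i)) : d = d' := by
  apply Finsupp.ext
  intro t
  by_cases ht0 : t = 0
  · rw [ht0]; exact h0
  by_cases ht1 : t = 1
  · rw [ht1]; exact h1
  have hv0 : (t : ℕ) ≠ 0 := fun h => ht0 (Fin.ext (by rw [h, val_zero']))
  have hv1 : (t : ℕ) ≠ 1 := fun h => ht1 (Fin.ext (by rw [h, val_one']))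
  have hlt := t.isLt
  have ht : t = fi k ((t : ℕ) - 2) := by
    apply Fin.ext
    rw [fi_val k (by omega)]
    omega
  rw [ht]
  exact hf _ (by omega)

lemma keyX (d d' : Fin (k+3) →₀ ℕ) (hA : ∀ i < k, d (fi k i) = 0)
    (h1 : d 0 + SA k d = SA k d') (h3 : SC k d = SC k d') (ha : d 0 ≠ 0) : False := by
  have hSA : SA k d = k * SC k d := by rw [SA_of_normA k d hA, SC_of_normA k d hA]
  have hle : SA k d' ≤ k * SC k d' := SA_le k d'
  have hK : k * SC k d = k * SC k d' := by rw [h3]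
  omega

lemma key (hk : 1 ≤ k) (d d' : Fin (k+3) →₀ ℕ) (hd : normal k d) (hd' : normal k d')
    (hE : Emap k d = Emap k d') (h0 : ¬(d 0 = 0 ∧ d 1 = 0)) : d = d' := by
  have e0 : EA k d = EA k d' := by rw [← Emap_applyA, ← Emap_applyA, hE]
  have e1 : EB k d = EB k d' := by rw [← Emap_applyB, ← Emap_applyB, hE]
  have e2 : EC k d = EC k d' := by rw [← Emap_applyC, ← Emap_applyC, hE]
  rw [EA_eq, EA_eq] at e0
  rw [EB_eq, EB_eq] at e1
  rw [EC_eq, EC_eq] at e2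
  rcases Nat.eq_zero_or_pos (d 0) with ha | ha
  · rcases Nat.eq_zero_or_pos (d' 0) with ha' | ha'
    · -- both a = 0
      have hb : d 1 ≠ 0 := by tauto
      have hSA : SA k d = SA k d' := by omega
      have hKC : k * SC k d = k * SC k d' := by rw [e2]
      have hAB := SA_add_SB k d
      have hAB' := SA_add_SB k d'
      have hSB : SB k d = SB k d' := by omega
      have hb1 : d 1 = d' 1 := by omega
      have hb' : d' 1 ≠ 0 := by omega
      have hm : SM k d ≤ 1 := hd.2.resolve_left hb
      have hm' : SM k d' ≤ 1 := hd'.2.resolve_left hb'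
      have hsplit := SA_split k hk d
      have hsplit' := SA_split k hk d'
      have hJlt : SJ k d < k := by
        have h1 := SJ_le k d
        have : (k-1) * SM k d ≤ (k-1) * 1 := Nat.mul_le_mul_left _ hm
        omega
      have hJlt' : SJ k d' < k := by
        have h1 := SJ_le k d'
        have : (k-1) * SM k d' ≤ (k-1) * 1 := Nat.mul_le_mul_left _ hm'
        omega
      -- divide by k
      have hck : d (fi k k) = d' (fi k k) := by
        have c1 : (SJ k d + k * d (fi k k)) / k = d (fi k k) := by
          rw [Nat.add_mul_div_left _ _ (by omega : 0 < k), Nat.div_eq_of_lt hJlt, zero_add]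
        have c2 : (SJ k d' + k * d' (fi k k)) / k = d' (fi k k) := by
          rw [Nat.add_mul_div_left _ _ (by omega : 0 < k), Nat.div_eq_of_lt hJlt', zero_add]
        rw [← c1, ← c2, ← hsplit, ← hsplit', hSA]
      have hJ : SJ k d = SJ k d' := by
        have c1 : (SJ k d + k * d (fi k k)) % k = SJ k d := by
          rw [Nat.add_mul_mod_self_left, Nat.mod_eq_of_lt hJlt]
        have c2 : (SJ k d' + k * d' (fi k k)) % k = SJ k d' := by
          rw [Nat.add_mul_mod_self_left, Nat.mod_eq_of_lt hJlt']
        rw [← c1, ← c2, ← hsplit, ← hsplit', hSA]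
      have hmm : SM k d = SM k d' := by
        have l1 := SM_le_SJ k d
        have l2 := SM_le_SJ k d'
        rcases Nat.eq_zero_or_pos (SM k d) with h | h
        · have hJ0 : SJ k d = 0 := (SM_zero_iff k d).1 h
          have hJ0' : SJ k d' = 0 := by omega
          have := (SM_zero_iff k d').2 hJ0'
          omega
        · have h1 : SJ k d ≠ 0 := fun hz => by
            have := (SM_zero_iff k d).2 hz; omega
          have h2 : SM k d' ≠ 0 := fun hz => by
            have := (SM_zero_iff k d').1 hz; omega
          omega
      have hc0 : d (fi k 0) = d' (fi k 0) := by
        have s1 := SC_split k hk d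
        have s2 := SC_split k hk d'
        omega
      have hmid : ∀ i, 1 ≤ i → i < k → d (fi k i) = d' (fi k i) := by
        rcases Nat.eq_zero_or_pos (SM k d) with h | h
        · have z1 : ∀ x ∈ Ico 1 k, d (fi k x) = 0 := by
            rw [← Finset.sum_eq_zero_iff]; exact h
          have z2 : ∀ x ∈ Ico 1 k, d' (fi k x) = 0 := by
            rw [← Finset.sum_eq_zero_iff]
            exact show SM k d' = 0 by omega
          intro i hi1 hik
          rw [z1 i (Finset.mem_Ico.2 ⟨hi1, hik⟩), z2 i (Finset.mem_Ico.2 ⟨hi1, hik⟩)]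
        · have hm1 : SM k d = 1 := by omega
          have hm1' : SM k d' = 1 := by omega
          obtain ⟨i₀, hi₀, hprop⟩ := sum_eq_one_exists (Ico 1 k) _ hm1
          obtain ⟨i₀', hi₀', hprop'⟩ := sum_eq_one_exists (Ico 1 k) _ hm1'
          have hJv : SJ k d = i₀ := by
            rw [SJ, Finset.sum_eq_single_of_mem i₀ hi₀]
            · rw [hprop i₀ hi₀, if_pos rfl, mul_one]
            · intro b hb hbne
              rw [hprop b hb, if_neg hbne, mul_zero]
          have hJv' : SJ k d' = i₀' := by
            rw [SJ, Finset.sum_eq_single_of_mem i₀' hi₀']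
            · rw [hprop' i₀' hi₀', if_pos rfl, mul_one]
            · intro b hb hbne
              rw [hprop' b hb, if_neg hbne, mul_zero]
          have : i₀ = i₀' := by omega
          subst this
          intro i hi1 hik
          rw [hprop i (Finset.mem_Ico.2 ⟨hi1, hik⟩), hprop' i (Finset.mem_Ico.2 ⟨hi1, hik⟩)]
      apply ext_exp k d d' (by omega) hb1
      intro i hik
      rcases Nat.eq_zero_or_pos i with rfl | hi1
      · exact hc0
      rcases eq_or_ne i k with rfl | hine
      · exact hck
      · exact hmid i hi1 (by omega)
    · -- a = 0, a' > 0 : contradiction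
      exact (keyX k d' d (hd'.1.resolve_left (by omega))
        (by omega) e2.symm (by omega)).elim
  · rcases Nat.eq_zero_or_pos (d' 0) with ha' | ha'
    · exact (keyX k d d' (hd.1.resolve_left (by omega))
        (by omega) e2 (by omega)).elim
    · -- both a > 0
      have hA : ∀ i < k, d (fi k i) = 0 := hd.1.resolve_left (by omega)
      have hA' : ∀ i < k, d' (fi k i) = 0 := hd'.1.resolve_left (by omega)
      have hSC : SC k d = d (fi k k) := SC_of_normA k d hA
      have hSC' : SC k d' = d' (fi k k) := SC_of_normA k d' hA'
      have hck : d (fi k k) = d' (fi k k) := by omega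
      have hSA : SA k d = k * d (fi k k) := SA_of_normA k d hA
      have hSA' : SA k d' = k * d' (fi k k) := SA_of_normA k d' hA'
      have hKC : k * d (fi k k) = k * d' (fi k k) := by rw [hck]
      have hSB : SB k d = 0 := SB_of_normA k d hA
      have hSB' : SB k d' = 0 := SB_of_normA k d' hA'
      apply ext_exp k d d' (by omega) (by omega)
      intro i hik
      rcases eq_or_ne i k with rfl | hine
      · exact hck
      · rw [hA i (by omega), hA' i (by omega)]


noncomputable def g2 : Fin (k+3) → MvPolynomial (Fin 3) ℂ :=
  fun t => monomial (Emap k (Finsupp.single t 1)) 1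

noncomputable def phi2 : MvPolynomial (Fin (k+3)) ℂ →ₐ[ℂ] MvPolynomial (Fin 3) ℂ :=
  aeval (g2 k)

lemma Emap_single_smul (t : Fin (k+3)) (m : ℕ) :
    Emap k (Finsupp.single t m) = m • Emap k (Finsupp.single t 1) := by
  rw [← Emap_smul]
  congr 1
  rw [Finsupp.smul_single]
  simp

lemma phi2_monomial (d : Fin (k+3) →₀ ℕ) (r : ℂ) :
    phi2 k (monomial d r) = monomial (Emap k d) r := by
  induction d using Finsupp.induction with
  | zero => rw [Emap_zero]; simp [phi2]
  | single_add a b f ha hb ih =>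
    rw [add_comm (Finsupp.single a b) f, monomial_add_single, map_mul, map_pow, ih]
    have hX : phi2 k (X a) = monomial (Emap k (Finsupp.single a 1)) 1 := by
      simp [phi2, g2]
    rw [hX, monomial_pow, one_pow, monomial_mul, mul_one]
    congr 1
    rw [Emap_add]
    have h2 : Emap k (Finsupp.single a b) = b • Emap k (Finsupp.single a 1) :=
      Emap_single_smul k a b
    rw [h2]

noncomputable def g1 : Fin (k+3) → MvPolynomial (Fin (k+3)) ℂ :=
  fun t => if (t:ℕ) < 2 then 0 else X t

noncomputable def phi1 : MvPolynomial (Fin (k+3)) ℂ →ₐ[ℂ] MvPolynomial (Fin (k+3)) ℂ :=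
  aeval (g1 k)

lemma phi1_monomial_zero (d : Fin (k+3) →₀ ℕ) (r : ℂ) (h : d 0 ≠ 0 ∨ d 1 ≠ 0) :
    phi1 k (monomial d r) = 0 := by
  rw [phi1, aeval_monomial]
  obtain ⟨t₀, ht₀v, ht₀lt⟩ : ∃ t₀ : Fin (k+3), d t₀ ≠ 0 ∧ (t₀:ℕ) < 2 := by
    rcases h with h | h
    · exact ⟨0, h, by rw [val_zero']; omega⟩
    · exact ⟨1, h, by rw [val_one']; omega⟩
  have hmem : t₀ ∈ d.support := Finsupp.mem_support_iff.2 ht₀v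
  have : (d.prod fun t e => g1 k t ^ e) = 0 := by
    apply Finset.prod_eq_zero hmem
    simp only [g1, if_pos ht₀lt]
    exact zero_pow ht₀v
  rw [this, mul_zero]

lemma phi1_monomial_id (d : Fin (k+3) →₀ ℕ) (r : ℂ) (h0 : d 0 = 0) (h1 : d 1 = 0) :
    phi1 k (monomial d r) = monomial d r := by
  rw [phi1, aeval_monomial, monomial_eq]
  congr 1
  apply Finsupp.prod_congr
  intro t ht
  have hdt : d t ≠ 0 := Finsupp.mem_support_iff.1 ht
  have htv : ¬ ((t:ℕ) < 2) := by
    have h2 : t ≠ 0 := fun h => hdt (h ▸ h0)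
    have h3 : t ≠ 1 := fun h => hdt (h ▸ h1)
    have v2 : (t:ℕ) ≠ 0 := fun h => h2 (Fin.ext (by rw [h, val_zero']))
    have v3 : (t:ℕ) ≠ 1 := fun h => h3 (Fin.ext (by rw [h, val_one']))
    omega
  simp only [g1, if_neg htv]

lemma anon_eq_fi {i : ℕ} (h : i < k) :
    (⟨i + 2, by omega⟩ : Fin (k+3)) = fi k i := by
  apply Fin.ext
  rw [fi_val k (by omega)]

lemma anon_eq_fi' {i : ℕ} (h : i < k) :
    (⟨i + 3, by omega⟩ : Fin (k+3)) = fi k (i+1) := by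
  apply Fin.ext
  rw [fi_val k (by omega)]

lemma phi1_rel (i : Fin k) : phi1 k (poncRel k i) = 0 := by
  have h0 : g1 k 0 = 0 := by simp only [g1]; rw [if_pos]; rw [val_zero']; omega
  have h1 : g1 k 1 = 0 := by simp only [g1]; rw [if_pos]; rw [val_one']; omega
  simp [poncRel, phi1, h0, h1]

lemma phi2_rel (i : Fin k) : phi2 k (poncRel k i) = 0 := by
  have hik := i.isLt
  rw [poncRel, map_sub, map_mul, map_mul]
  have hg : ∀ t, phi2 k (X t) = monomial (Emap k (Finsupp.single t 1)) 1 := by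
    intro t; simp [phi2, g2]
  rw [anon_eq_fi k hik, anon_eq_fi' k hik, hg, hg, hg, hg, monomial_mul, monomial_mul,
    mul_one]
  have hexp : Emap k (Finsupp.single 0 1) + Emap k (Finsupp.single (fi k (i:ℕ)) 1)
      = Emap k (Finsupp.single 1 1) + Emap k (Finsupp.single (fi k ((i:ℕ)+1)) 1) := by
    have wa1 : wA k (fi k (i:ℕ)) = (i:ℕ) := wA_fi k (by omega)
    have wa2 : wA k (fi k ((i:ℕ)+1)) = (i:ℕ)+1 := wA_fi k (by omega)
    have wb1 : wB k (fi k (i:ℕ)) = k - (i:ℕ) := wB_fi k (by omega)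
    have wb2 : wB k (fi k ((i:ℕ)+1)) = k - ((i:ℕ)+1) := wB_fi k (by omega)
    have wc1 : wC k (fi k (i:ℕ)) = 1 := wC_fi k (by omega)
    have wc2 : wC k (fi k ((i:ℕ)+1)) = 1 := wC_fi k (by omega)
    apply Finsupp.ext
    intro m
    fin_cases m <;>
      simp [Emap, Finsupp.add_apply, EA_single, EB_single, EC_single,
        wa1, wa2, wb1, wb2, wc1, wc2, wA_zero, wA_one, wB_zero, wB_one, wC_zero, wC_one] <;>
      omega
  rw [hexp, sub_self]

lemma mem_ker1 (p : MvPolynomial (Fin (k+3)) ℂ)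
    (hp : p ∈ Ideal.span (Set.range (poncRel k))) : phi1 k p = 0 := by
  have hle : Ideal.span (Set.range (poncRel k)) ≤ RingHom.ker (phi1 k).toRingHom := by
    rw [Ideal.span_le]
    rintro _ ⟨i, rfl⟩
    exact phi1_rel k i
  exact hle hp

lemma mem_ker2 (p : MvPolynomial (Fin (k+3)) ℂ)
    (hp : p ∈ Ideal.span (Set.range (poncRel k))) : phi2 k p = 0 := by
  have hle : Ideal.span (Set.range (poncRel k)) ≤ RingHom.ker (phi2 k).toRingHom := by
    rw [Ideal.span_le]
    rintro _ ⟨i, rfl⟩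
    exact phi2_rel k i
  exact hle hp


def mu (d : Fin (k+3) →₀ ℕ) : ℕ := ∑ i ∈ range (k+1), (k^2 - i^2) * d (fi k i)

lemma mu_add (d e) : mu k (d + e) = mu k d + mu k e := by
  simp [mu, mul_add, Finset.sum_add_distrib]

lemma mu_single_fi {i : ℕ} (h : i ≤ k) (m : ℕ) :
    mu k (Finsupp.single (fi k i) m) = (k^2 - i^2) * m := by
  rw [mu, Finset.sum_eq_single_of_mem i (by simp; omega)]
  · rw [Finsupp.single_eq_same]
  · intro b hb hbi
    rw [Finset.mem_range] at hb
    have : fi k i ≠ fi k b := fun hc => hbi (fi_inj k h (by omega) hc).symm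
    rw [Finsupp.single_eq_of_ne' this, mul_zero]

lemma mu_single_zero (m : ℕ) : mu k (Finsupp.single 0 m) = 0 := by
  rw [mu]
  apply Finset.sum_eq_zero
  intro i _
  rw [Finsupp.single_eq_of_ne' (Ne.symm (fi_ne_zero k i)), mul_zero]

lemma mu_single_one (m : ℕ) : mu k (Finsupp.single 1 m) = 0 := by
  rw [mu]
  apply Finset.sum_eq_zero
  intro i _
  rw [Finsupp.single_eq_of_ne' (Ne.symm (fi_ne_one k i)), mul_zero]

lemma two_idx (d : Fin (k+3) →₀ ℕ) (h2 : 2 ≤ SM k d) :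
    ∃ i j, 1 ≤ i ∧ i ≤ j ∧ j < k ∧ 1 ≤ d (fi k i) ∧ 1 ≤ d (fi k j) ∧
      (i = j → 2 ≤ d (fi k i)) := by
  have hne : SM k d ≠ 0 := by omega
  obtain ⟨i₀, hi₀, hv₀⟩ := Finset.exists_ne_zero_of_sum_ne_zero hne
  rw [Finset.mem_Ico] at hi₀
  by_cases hbig : 2 ≤ d (fi k i₀)
  · exact ⟨i₀, i₀, hi₀.1, le_refl _, hi₀.2, by omega, by omega, fun _ => hbig⟩
  · have hv1 : d (fi k i₀) = 1 := by omega
    have hsplit : d (fi k i₀) + ∑ x ∈ (Ico 1 k).erase i₀, d (fi k x) = SM k d :=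
      Finset.add_sum_erase (Ico 1 k) (fun i => d (fi k i)) (Finset.mem_Ico.2 hi₀)
    have : ∑ x ∈ (Ico 1 k).erase i₀, d (fi k x) ≠ 0 := by omega
    obtain ⟨j₀, hj₀, hvj₀⟩ := Finset.exists_ne_zero_of_sum_ne_zero this
    have hj₀mem := Finset.mem_of_mem_erase hj₀
    rw [Finset.mem_Ico] at hj₀mem
    have hj₀ne : j₀ ≠ i₀ := Finset.ne_of_mem_erase hj₀
    rcases le_total i₀ j₀ with hle | hle
    · exact ⟨i₀, j₀, hi₀.1, hle, hj₀mem.2, by omega, by omega, fun h => by omega⟩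
    · exact ⟨j₀, i₀, hj₀mem.1, hle, hi₀.2, by omega, by omega, fun h => by omega⟩

lemma sq_le_sq {a b : ℕ} (h : a ≤ b) : a^2 ≤ b^2 := Nat.pow_le_pow_left h 2

lemma reduce_monomial (hk : 1 ≤ k) : ∀ n (d : Fin (k+3) →₀ ℕ) (r : ℂ), mu k d < n →
    ∃ q : MvPolynomial (Fin (k+3)) ℂ, (∀ e ∈ q.support, normal k e) ∧
      monomial d r - q ∈ Ideal.span (Set.range (poncRel k)) := by
  intro n
  induction n with
  | zero => intro d r h; omega
  | succ n ih =>
    intro d r hlt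
    by_cases hn : normal k d
    · refine ⟨monomial d r, ?_, by rw [sub_self]; exact Ideal.zero_mem _⟩
      intro e he
      have := support_monomial_subset he
      rw [Finset.mem_singleton] at this
      rwa [this]
    · rw [normal, not_and_or] at hn
      rcases hn with hn | hn
      · -- x-rule
        push_neg at hn
        obtain ⟨ha, j, hj, hdj⟩ := hn
        have hs : Finsupp.single (0 : Fin (k+3)) 1 + Finsupp.single (fi k j) 1 ≤ d := by
          rw [Finsupp.le_def]
          intro t
          rcases eq_or_ne t 0 with rfl | ht0
          · rw [Finsupp.add_apply, Finsupp.single_eq_same,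
              Finsupp.single_eq_of_ne' (fi_ne_zero k j)]
            omega
          · rcases eq_or_ne t (fi k j) with rfl | ht1
            · rw [Finsupp.add_apply, Finsupp.single_eq_of_ne' (Ne.symm ht0),
                Finsupp.single_eq_same]
              omega
            · rw [Finsupp.add_apply, Finsupp.single_eq_of_ne' (Ne.symm ht0),
                Finsupp.single_eq_of_ne' (Ne.symm ht1)]
              omega
        set e := d - (Finsupp.single (0 : Fin (k+3)) 1 + Finsupp.single (fi k j) 1) with he
        have hde : e + (Finsupp.single (0 : Fin (k+3)) 1 + Finsupp.single (fi k j) 1) = d :=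
          tsub_add_cancel_of_le hs
        have hd_eq : (e + Finsupp.single (0 : Fin (k+3)) 1) + Finsupp.single (fi k j) 1 = d := by
          rw [add_assoc]; exact hde
        set d' := (e + Finsupp.single (1 : Fin (k+3)) 1) + Finsupp.single (fi k (j+1)) 1 with hd'
        have key1 : monomial d r = monomial e r * X 0 * X (fi k j) := by
          rw [← hd_eq, monomial_add_single, monomial_add_single, pow_one, pow_one]
        have key2 : monomial d' r = monomial e r * X 1 * X (fi k (j+1)) := by
          rw [hd', monomial_add_single, monomial_add_single, pow_one, pow_one]
        have hrel : monomial d r - monomial d' r = monomial e r * poncRel k ⟨j, hj⟩ := by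
          rw [key1, key2, poncRel]
          rw [show ((⟨(j:ℕ)+2, by omega⟩ : Fin (k+3))) = fi k j from anon_eq_fi k hj]
          rw [show ((⟨(j:ℕ)+3, by omega⟩ : Fin (k+3))) = fi k (j+1) from anon_eq_fi' k hj]
          ring
        have hmem : monomial d r - monomial d' r ∈ Ideal.span (Set.range (poncRel k)) := by
          rw [hrel]
          exact Ideal.mul_mem_left _ _ (Ideal.subset_span ⟨⟨j, hj⟩, rfl⟩)
        have hmu : mu k d' < mu k d := by
          have e1 : mu k d = mu k e + (k^2 - j^2) := by
            rw [← hd_eq, mu_add, mu_add, mu_single_zero, mu_single_fi k (by omega)]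
            ring
          have e2 : mu k d' = mu k e + (k^2 - (j+1)^2) := by
            rw [hd', mu_add, mu_add, mu_single_one, mu_single_fi k (by omega)]
            ring
          have q1 : (j+1)^2 ≤ k^2 := sq_le_sq (by omega)
          have q2 : j^2 < (j+1)^2 := Nat.pow_lt_pow_left (by omega) (by omega)
          omega
        obtain ⟨q, hq, hqmem⟩ := ih d' r (by omega)
        refine ⟨q, hq, ?_⟩
        have := Ideal.add_mem _ hmem hqmem
        rwa [sub_add_sub_cancel] at this
      · -- y-rule
        push_neg at hn
        obtain ⟨hb, hsm⟩ := hn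
        obtain ⟨i, j, hi1, hij, hjk, hdi, hdj, hdij⟩ := two_idx k d (by omega)
        have hfij : i = j ∨ fi k i ≠ fi k j := by
          rcases eq_or_ne i j with h | h
          · exact Or.inl h
          · exact Or.inr (fun hc => h (fi_inj k (by omega) (by omega) hc))
        have hs : (Finsupp.single (1 : Fin (k+3)) 1 + Finsupp.single (fi k i) 1)
            + Finsupp.single (fi k j) 1 ≤ d := by
          rw [Finsupp.le_def]
          intro t
          rw [Finsupp.add_apply, Finsupp.add_apply, Finsupp.single_apply,
            Finsupp.single_apply, Finsupp.single_apply]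
          rcases eq_or_ne (1 : Fin (k+3)) t with rfl | h1
          · rw [if_pos rfl, if_neg (fi_ne_one k i), if_neg (fi_ne_one k j)]
            omega
          · rw [if_neg h1]
            rcases eq_or_ne (fi k i) t with rfl | hti
            · rw [if_pos rfl]
              rcases eq_or_ne i j with rfl | hij'
              · rw [if_pos rfl]
                have := hdij rfl
                omega
              · rw [if_neg (fun hc => hij' (fi_inj k (by omega) (by omega) hc).symm)]
                omega
            · rw [if_neg hti]
              rcases eq_or_ne (fi k j) t with rfl | htj
              · rw [if_pos rfl]; omega
              · rw [if_neg htj]; omega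
        set e := d - ((Finsupp.single (1 : Fin (k+3)) 1 + Finsupp.single (fi k i) 1)
            + Finsupp.single (fi k j) 1) with he
        have hde : e + ((Finsupp.single (1 : Fin (k+3)) 1 + Finsupp.single (fi k i) 1)
            + Finsupp.single (fi k j) 1) = d := tsub_add_cancel_of_le hs
        have hd_eq : ((e + Finsupp.single (1 : Fin (k+3)) 1) + Finsupp.single (fi k i) 1)
            + Finsupp.single (fi k j) 1 = d := by
          rw [← hde]; abel
        set d' := ((e + Finsupp.single (1 : Fin (k+3)) 1) + Finsupp.single (fi k (i-1)) 1)
            + Finsupp.single (fi k (j+1)) 1 with hd'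
        have key1 : monomial d r = monomial e r * X 1 * X (fi k i) * X (fi k j) := by
          rw [← hd_eq, monomial_add_single, monomial_add_single, monomial_add_single,
            pow_one, pow_one, pow_one]
        have key2 : monomial d' r = monomial e r * X 1 * X (fi k (i-1)) * X (fi k (j+1)) := by
          rw [hd', monomial_add_single, monomial_add_single, monomial_add_single,
            pow_one, pow_one, pow_one]
        have hrel : monomial d r - monomial d' r =
            monomial e r * (X (fi k (i-1)) * poncRel k ⟨j, hjk⟩
              - X (fi k j) * poncRel k ⟨i-1, by omega⟩) := by
          rw [key1, key2, poncRel, poncRel]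
          rw [show ((⟨(j:ℕ)+2, by omega⟩ : Fin (k+3))) = fi k j from anon_eq_fi k hjk]
          rw [show ((⟨(j:ℕ)+3, by omega⟩ : Fin (k+3))) = fi k (j+1) from anon_eq_fi' k hjk]
          rw [show ((⟨(i-1)+2, by omega⟩ : Fin (k+3))) = fi k (i-1) from
            anon_eq_fi k (by omega)]
          have : (⟨(i-1)+3, by omega⟩ : Fin (k+3)) = fi k i := by
            apply Fin.ext
            rw [fi_val k (by omega)]
            show i - 1 + 3 = i + 2
            omega
          rw [this]
          ring
        have hmem : monomial d r - monomial d' r ∈ Ideal.span (Set.range (poncRel k)) := by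
          rw [hrel]
          apply Ideal.mul_mem_left
          exact sub_mem (Ideal.mul_mem_left _ _ (Ideal.subset_span ⟨⟨j, hjk⟩, rfl⟩))
            (Ideal.mul_mem_left _ _ (Ideal.subset_span ⟨⟨i-1, by omega⟩, rfl⟩))
        have hmu : mu k d' < mu k d := by
          have e1 : mu k d = mu k e + (k^2 - i^2) + (k^2 - j^2) := by
            rw [← hd_eq, mu_add, mu_add, mu_add, mu_single_one,
              mu_single_fi k (by omega), mu_single_fi k (by omega)]
            ring
          have e2 : mu k d' = mu k e + (k^2 - (i-1)^2) + (k^2 - (j+1)^2) := by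
            rw [hd', mu_add, mu_add, mu_add, mu_single_one,
              mu_single_fi k (by omega), mu_single_fi k (by omega)]
            ring
          have q1 : (j+1)^2 ≤ k^2 := sq_le_sq (by omega)
          have q2 : i^2 ≤ j^2 := sq_le_sq hij
          have q3 : (i-1)^2 + 2*i = i^2 + 1 := by
            obtain ⟨a, rfl⟩ : ∃ a, i = a + 1 := ⟨i-1, by omega⟩
            simp only [Nat.add_sub_cancel]
            ring
          have q4 : (j+1)^2 = j^2 + 2*j + 1 := by ring
          omega
        obtain ⟨q, hq, hqmem⟩ := ih d' r (by omega)
        refine ⟨q, hq, ?_⟩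
        have := Ideal.add_mem _ hmem hqmem
        rwa [sub_add_sub_cancel] at this


lemma reduce_poly (hk : 1 ≤ k) (p : MvPolynomial (Fin (k+3)) ℂ) :
    ∃ q : MvPolynomial (Fin (k+3)) ℂ, (∀ e ∈ q.support, normal k e) ∧
      p - q ∈ Ideal.span (Set.range (poncRel k)) := by
  induction p using MvPolynomial.induction_on' with
  | monomial u a => exact reduce_monomial k hk (mu k u + 1) u a (by omega)
  | add p1 p2 ih1 ih2 =>
    obtain ⟨q1, hq1, hm1⟩ := ih1
    obtain ⟨q2, hq2, hm2⟩ := ih2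
    refine ⟨q1 + q2, ?_, ?_⟩
    · intro e he
      rcases Finset.mem_union.1 (Finsupp.support_add he) with h | h
      · exact hq1 e h
      · exact hq2 e h
    · have := Ideal.add_mem _ hm1 hm2
      rwa [← add_sub_add_comm] at this

lemma normal_zero_of_phi (hk : 1 ≤ k) (q : MvPolynomial (Fin (k+3)) ℂ)
    (hq : ∀ e ∈ q.support, normal k e) (h1 : phi1 k q = 0) (h2 : phi2 k q = 0) :
    q = 0 := by
  apply MvPolynomial.ext
  intro d
  rw [coeff_zero]
  by_cases hd : d ∈ q.support
  swap
  · exact MvPolynomial.notMem_support_iff.1 hd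
  have hnd := hq d hd
  by_cases hF : d 0 = 0 ∧ d 1 = 0
  · -- use phi1
    have hexp : phi1 k q = ∑ e ∈ q.support, phi1 k (monomial e (coeff e q)) := by
      conv_lhs => rw [MvPolynomial.as_sum q]
      rw [map_sum]
    have hco : coeff d (phi1 k q) = coeff d q := by
      rw [hexp, MvPolynomial.coeff_sum, Finset.sum_eq_single_of_mem d hd]
      · rw [phi1_monomial_id k d _ hF.1 hF.2, coeff_monomial, if_pos rfl]
      · intro e he hne
        by_cases heF : e 0 = 0 ∧ e 1 = 0
        · rw [phi1_monomial_id k e _ heF.1 heF.2, coeff_monomial, if_neg hne]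
        · rw [phi1_monomial_zero k e _ (by tauto), coeff_zero]
    rw [h1, coeff_zero] at hco
    exact hco.symm
  · -- use phi2
    have hexp : phi2 k q = ∑ e ∈ q.support, monomial (Emap k e) (coeff e q) := by
      conv_lhs => rw [MvPolynomial.as_sum q]
      rw [map_sum]
      apply Finset.sum_congr rfl
      intro e _
      rw [phi2_monomial]
    have hco : coeff (Emap k d) (phi2 k q) = coeff d q := by
      rw [hexp, MvPolynomial.coeff_sum, Finset.sum_eq_single_of_mem d hd]
      · rw [coeff_monomial, if_pos rfl]
      · intro e he hne
        rw [coeff_monomial]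
        rcases eq_or_ne (Emap k e) (Emap k d) with hE | hE
        · exact absurd (key k hk d e hnd (hq e he) hE.symm hF).symm hne
        · rw [if_neg hE]
    rw [h2, coeff_zero] at hco
    exact hco.symm

lemma main_ker (hk : 1 ≤ k) (p : MvPolynomial (Fin (k+3)) ℂ)
    (h1 : phi1 k p = 0) (h2 : phi2 k p = 0) :
    p ∈ Ideal.span (Set.range (poncRel k)) := by
  obtain ⟨q, hq, hmem⟩ := reduce_poly k hk p
  have hq1 : phi1 k q = 0 := by
    have := mem_ker1 k _ hmem
    rw [map_sub, h1] at this
    linear_combination -this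
  have hq2 : phi2 k q = 0 := by
    have := mem_ker2 k _ hmem
    rw [map_sub, h2] at this
    linear_combination -this
  have := normal_zero_of_phi k hk q hq hq1 hq2
  rw [this, sub_zero] at hmem
  exact hmem

end Stmt5

theorem stmt5 (k : ℕ) (hk : 1 ≤ k) :
    IsReduced (MvPolynomial (Fin (k + 3)) ℂ ⧸ Ideal.span (Set.range (poncRel k))) := by
  constructor
  intro a ha
  obtain ⟨p, rfl⟩ := Ideal.Quotient.mk_surjective a
  obtain ⟨n, hn⟩ := ha
  rcases Nat.eq_zero_or_pos n with rfl | hnpos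
  · rw [pow_zero] at hn
    have : (Ideal.Quotient.mk (Ideal.span (Set.range (poncRel k))) p) * 1 = 0 := by
      rw [hn, mul_zero]
    rwa [mul_one] at this
  · rw [← map_pow, Ideal.Quotient.eq_zero_iff_mem] at hn
    have h1 : Stmt5.phi1 k (p ^ n) = 0 := Stmt5.mem_ker1 k _ hn
    have h2 : Stmt5.phi2 k (p ^ n) = 0 := Stmt5.mem_ker2 k _ hn
    rw [map_pow] at h1 h2
    have h1' : Stmt5.phi1 k p = 0 := pow_eq_zero_iff (by omega : n ≠ 0) |>.1 h1
    have h2' : Stmt5.phi2 k p = 0 := pow_eq_zero_iff (by omega : n ≠ 0) |>.1 h2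
    rw [Ideal.Quotient.eq_zero_iff_mem]
    exact Stmt5.main_ker k hk p h1' h2'
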